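/- Let (M, <) be a linear order and R : M → M → Prop an arbitrary binary relation; for finite subsets A, B, C of M define A ⫝_B C to mean: for every a ∈ A \ B and c ∈ C \ B, neither R a c nor R c a holds, and if a < c then there exists b ∈ B with a < b < c. Let A, B, B', C be finite subsets of M with A ∩ B = ∅ and C ∩ B = ∅, suppose A ⫝_{B ∪ B'} C, and suppose that for every b ∈ B \ B' and c ∈ C \ B' with b < c there exists b' ∈ B' with b < b' < c. Then A ⫝_{B'} C. -/
import Mathlib

/-- The ternary independence relation on finite subsets of a linear order `M`
determined by a binary relation `R`: `Indep R A B C` holds iff for every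
`a ∈ A \\ B` and `c ∈ C \\ B`, neither `R a c` nor `R c a` holds, and if `a < c`
then some `b ∈ B` satisfies `a < b < c`. -/
def Indep {M : Type*} [LinearOrder M] (R : M → M → Prop) (A B C : Finset M) : Prop :=
  ∀ a ∈ A, a ∉ B → ∀ c ∈ C, c ∉ B →
    (¬ R a c ∧ ¬ R c a) ∧ (a < c → ∃ b ∈ B, a < b ∧ b < c)

/-- If `A ∩ B = ∅`, `C ∩ B = ∅`, `A ⫝_{B ∪ B'} C`, and every
`b ∈ B \\ B'` and `c ∈ C \\ B'` with `b < c` admit `b' ∈ B'` with `b < b' < c`,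
then `A ⫝_{B'} C`. -/
theorem stmt16 {M : Type*} [LinearOrder M] (R : M → M → Prop)
    (A B B' C : Finset M) (hAB : A ∩ B = ∅) (hCB : C ∩ B = ∅)
    (h1 : Indep R A (B ∪ B') C)
    (h2 : ∀ b ∈ B, b ∉ B' → ∀ c ∈ C, c ∉ B' → b < c → ∃ b' ∈ B', b < b' ∧ b' < c) :
    Indep R A B' C := by
  intro a ha haB' c hc hcB'
  have haB : a ∉ B := fun h => (Finset.eq_empty_iff_forall_notMem.mp hAB a)
    (Finset.mem_inter.mpr ⟨ha, h⟩)
  have hcBn : c ∉ B := fun h => (Finset.eq_empty_iff_forall_notMem.mp hCB c)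
    (Finset.mem_inter.mpr ⟨hc, h⟩)
  have haU : a ∉ B ∪ B' := by simp [haB, haB']
  have hcU : c ∉ B ∪ B' := by simp [hcBn, hcB']
  obtain ⟨hR, hlt⟩ := h1 a ha haU c hc hcU
  refine ⟨hR, fun hac => ?_⟩
  obtain ⟨b, hb, hab, hbc⟩ := hlt hac
  rcases Finset.mem_union.mp hb with hbB | hbB'
  · by_cases hbB' : b ∈ B'
    · exact ⟨b, hbB', hab, hbc⟩
    · obtain ⟨b', hb', hbb', hb'c⟩ := h2 b hbB hbB' c hc hcB' hbc
      exact ⟨b', hb', hab.trans hbb', hb'c⟩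
  · exact ⟨b, hbB', hab, hbc⟩
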